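/- There exists a constant K > 0, depending only on the dimension d ≥ 2, with the following property: whenever C and C' are isometric rigid solid cylinders both contained in a Euclidean ball B(p,r) ⊂ ℝ^d, there exists a C¹ diffeomorphism φ of ℝ^d whose support is contained in B(p,10r), which maps C isometrically onto C', and which satisfies [φ]_{Lip} ≤ K. -/

import Mathlib

/-- The rigid solid cylinder `C(a,b;ρ)` in `ℝ^d`:
`{(a+b)/2 + (s/2)•(b-a) + v : s ∈ (-1,1), v ⊥ (b-a), ‖v‖ < ρ}`. -/
def rigidCyl {d : ℕ} (a b : EuclideanSpace ℝ (Fin d)) (ρ : ℝ) :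
    Set (EuclideanSpace ℝ (Fin d)) :=
  {x | ∃ (s : ℝ) (v : EuclideanSpace ℝ (Fin d)), |s| < 1 ∧ (inner ℝ v (b - a) : ℝ) = 0 ∧
    ‖v‖ < ρ ∧ x = midpoint ℝ a b + (s / 2) • (b - a) + v}


noncomputable section
open Real
open scoped RealInnerProductSpace

variable {E : Type*} [NormedAddCommGroup E] [InnerProductSpace ℝ E]

/-- Rotation by (cos,sin)=(c,s) in the plane spanned by orthonormal e,f. -/
def rotAux (e f : E) (c s : ℝ) (z : E) : E :=
  z + (c - 1) • (⟪z, e⟫ • e + ⟪z, f⟫ • f) + s • (⟪z, e⟫ • f - ⟪z, f⟫ • e)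

variable {e f : E}

lemma rotAux_sub (c s : ℝ) (z w : E) :
    rotAux e f c s (z - w) = rotAux e f c s z - rotAux e f c s w := by
  simp only [rotAux, inner_sub_left, sub_smul, smul_sub, smul_add]
  module

lemma rotAux_add (c s : ℝ) (z w : E) :
    rotAux e f c s (z + w) = rotAux e f c s z + rotAux e f c s w := by
  simp only [rotAux, inner_add_left, add_smul, smul_sub, smul_add]
  module

lemma rotAux_smul (c s t : ℝ) (z : E) :
    rotAux e f c s (t • z) = t • rotAux e f c s z := by
  simp only [rotAux, real_inner_smul_left, smul_add, smul_sub, mul_smul]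
  module

lemma rotAux_zero (c s : ℝ) : rotAux e f c s (0 : E) = 0 := by
  simp [rotAux]

lemma rotAux_one_zero (z : E) : rotAux e f 1 0 z = z := by
  simp [rotAux]

lemma rotAux_sub_rotAux (c s c' s' : ℝ) (z : E) :
    rotAux e f c s z - rotAux e f c' s' z =
      (c - c') • (⟪z, e⟫ • e + ⟪z, f⟫ • f) + (s - s') • (⟪z, e⟫ • f - ⟪z, f⟫ • e) := by
  simp only [rotAux, sub_smul]
  module

section ortho
variable (he : ‖e‖ = 1) (hf : ‖f‖ = 1) (hef : ⟪e, f⟫ = 0)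
include he hf hef

lemma rotAux_inner (c s : ℝ) (hcs : c ^ 2 + s ^ 2 = 1) (z w : E) :
    ⟪rotAux e f c s z, rotAux e f c s w⟫ = ⟪z, w⟫ := by
  have hee : ⟪e, e⟫ = 1 := by rw [real_inner_self_eq_norm_sq, he]; norm_num
  have hff : ⟪f, f⟫ = 1 := by rw [real_inner_self_eq_norm_sq, hf]; norm_num
  have hfe : ⟪f, e⟫ = 0 := by rw [real_inner_comm]; exact hef
  simp only [rotAux, inner_add_left, inner_add_right, inner_sub_left, inner_sub_right,
    real_inner_smul_left, real_inner_smul_right, hee, hff, hef, hfe, real_inner_comm w e,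
    real_inner_comm w f]
  linear_combination (⟪z, e⟫ * ⟪w, e⟫ + ⟪z, f⟫ * ⟪w, f⟫) * hcs

lemma rotAux_norm (c s : ℝ) (hcs : c ^ 2 + s ^ 2 = 1) (z : E) :
    ‖rotAux e f c s z‖ = ‖z‖ := by
  have h := rotAux_inner he hf hef c s hcs z z
  rw [real_inner_self_eq_norm_sq, real_inner_self_eq_norm_sq] at h
  rw [← Real.sqrt_sq (norm_nonneg (rotAux e f c s z)), ← Real.sqrt_sq (norm_nonneg z), h]

lemma rotAux_comp (c₁ s₁ c₂ s₂ : ℝ) (z : E) :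
    rotAux e f c₁ s₁ (rotAux e f c₂ s₂ z) =
      rotAux e f (c₁ * c₂ - s₁ * s₂) (s₁ * c₂ + c₁ * s₂) z := by
  have hee : ⟪e, e⟫ = 1 := by rw [real_inner_self_eq_norm_sq, he]; norm_num
  have hff : ⟪f, f⟫ = 1 := by rw [real_inner_self_eq_norm_sq, hf]; norm_num
  have hfe : ⟪f, e⟫ = 0 := by rw [real_inner_comm]; exact hef
  simp only [rotAux, inner_add_left, inner_sub_left, real_inner_smul_left, hee, hff, hef, hfe]
  module

lemma proj_sq_le (z : E) : ⟪z, e⟫ ^ 2 + ⟪z, f⟫ ^ 2 ≤ ‖z‖ ^ 2 := by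
  have hee : ⟪e, e⟫ = 1 := by rw [real_inner_self_eq_norm_sq, he]; norm_num
  have hff : ⟪f, f⟫ = 1 := by rw [real_inner_self_eq_norm_sq, hf]; norm_num
  have hfe : ⟪f, e⟫ = 0 := by rw [real_inner_comm]; exact hef
  have h0 : (0:ℝ) ≤ ‖z - (⟪z, e⟫ • e + ⟪z, f⟫ • f)‖ ^ 2 := sq_nonneg _
  rw [← real_inner_self_eq_norm_sq] at h0 ⊢
  simp only [inner_sub_left, inner_sub_right, inner_add_left, inner_add_right,
    real_inner_smul_left, real_inner_smul_right, hee, hff, hef, hfe, real_inner_comm z e,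
    real_inner_comm z f] at h0 ⊢
  nlinarith [h0]

lemma norm_projP_le (z : E) : ‖⟪z, e⟫ • e + ⟪z, f⟫ • f‖ ≤ ‖z‖ := by
  have hee : ⟪e, e⟫ = 1 := by rw [real_inner_self_eq_norm_sq, he]; norm_num
  have hff : ⟪f, f⟫ = 1 := by rw [real_inner_self_eq_norm_sq, hf]; norm_num
  have hfe : ⟪f, e⟫ = 0 := by rw [real_inner_comm]; exact hef
  have h1 : ‖⟪z, e⟫ • e + ⟪z, f⟫ • f‖ ^ 2 = ⟪z, e⟫ ^ 2 + ⟪z, f⟫ ^ 2 := by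
    rw [← real_inner_self_eq_norm_sq]
    simp only [inner_add_left, inner_add_right, real_inner_smul_left, real_inner_smul_right,
      hee, hff, hef, hfe]
    ring
  have h2 := proj_sq_le he hf hef z
  nlinarith [norm_nonneg (⟪z, e⟫ • e + ⟪z, f⟫ • f), norm_nonneg z]

lemma norm_projQ_le (z : E) : ‖⟪z, e⟫ • f - ⟪z, f⟫ • e‖ ≤ ‖z‖ := by
  have hee : ⟪e, e⟫ = 1 := by rw [real_inner_self_eq_norm_sq, he]; norm_num
  have hff : ⟪f, f⟫ = 1 := by rw [real_inner_self_eq_norm_sq, hf]; norm_num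
  have hfe : ⟪f, e⟫ = 0 := by rw [real_inner_comm]; exact hef
  have h1 : ‖⟪z, e⟫ • f - ⟪z, f⟫ • e‖ ^ 2 = ⟪z, e⟫ ^ 2 + ⟪z, f⟫ ^ 2 := by
    rw [← real_inner_self_eq_norm_sq]
    simp only [inner_sub_left, inner_sub_right, real_inner_smul_left, real_inner_smul_right,
      hee, hff, hef, hfe]
    ring
  have h2 := proj_sq_le he hf hef z
  nlinarith [norm_nonneg (⟪z, e⟫ • f - ⟪z, f⟫ • e), norm_nonneg z]

end ortho

lemma abs_cos_sub_cos_le (a b : ℝ) : |Real.cos a - Real.cos b| ≤ |a - b| := by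
  rw [Real.cos_sub_cos]
  have h1 : |Real.sin ((a + b) / 2)| ≤ 1 := Real.abs_sin_le_one _
  have h2 : |Real.sin ((a - b) / 2)| ≤ |a - b| / 2 := by
    have := Real.abs_sin_le_abs (x := (a - b) / 2)
    rwa [abs_div, abs_two] at this
  have h3 : (0:ℝ) ≤ |Real.sin ((a - b) / 2)| := abs_nonneg _
  rw [abs_mul, abs_mul, abs_neg, abs_two]
  nlinarith [abs_nonneg (Real.sin ((a + b) / 2))]

lemma abs_sin_sub_sin_le (a b : ℝ) : |Real.sin a - Real.sin b| ≤ |a - b| := by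
  rw [Real.sin_sub_sin]
  have h1 : |Real.cos ((a + b) / 2)| ≤ 1 := Real.abs_cos_le_one _
  have h2 : |Real.sin ((a - b) / 2)| ≤ |a - b| / 2 := by
    have := Real.abs_sin_le_abs (x := (a - b) / 2)
    rwa [abs_div, abs_two] at this
  have h3 : (0:ℝ) ≤ |Real.sin ((a - b) / 2)| := abs_nonneg _
  rw [abs_mul, abs_mul, abs_two]
  nlinarith [abs_nonneg (Real.cos ((a + b) / 2))]

/-- The twist map: rotate by angle `g(‖x-q‖²)` in the (e,f)-plane about center `q`. -/
def twist (q e f : E) (g : ℝ → ℝ) (x : E) : E :=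
  q + rotAux e f (Real.cos (g (‖x - q‖ ^ 2))) (Real.sin (g (‖x - q‖ ^ 2))) (x - q)

lemma twist_apply_of_angle {q : E} {g : ℝ → ℝ} {x : E} {α : ℝ}
    (h : g (‖x - q‖ ^ 2) = α) :
    twist q e f g x = q + rotAux e f (Real.cos α) (Real.sin α) (x - q) := by
  rw [twist, h]

lemma twist_eq_self {q : E} {g : ℝ → ℝ} {x : E} (h : g (‖x - q‖ ^ 2) = 0) :
    twist q e f g x = x := by
  simp [twist, h, rotAux_one_zero]

section ortho
variable (he : ‖e‖ = 1) (hf : ‖f‖ = 1) (hef : ⟪e, f⟫ = 0)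
include he hf hef

lemma twist_norm_sub_center (q : E) (g : ℝ → ℝ) (x : E) :
    ‖twist q e f g x - q‖ = ‖x - q‖ := by
  simp only [twist, add_sub_cancel_left]
  exact rotAux_norm he hf hef _ _ (Real.cos_sq_add_sin_sq _) _

lemma twist_twist (q : E) (g₁ g₂ : ℝ → ℝ) (x : E) :
    twist q e f g₁ (twist q e f g₂ x) = twist q e f (g₁ + g₂) x := by
  have hn : ‖twist q e f g₂ x - q‖ = ‖x - q‖ := twist_norm_sub_center he hf hef q g₂ x
  simp only [twist, add_sub_cancel_left] at *
  rw [hn, rotAux_comp he hf hef, ← Real.cos_add, ← Real.sin_add, Pi.add_apply]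

lemma twist_inv (q : E) (g : ℝ → ℝ) (x : E) :
    twist q e f (-g) (twist q e f g x) = x := by
  rw [twist_twist he hf hef, neg_add_cancel]
  simp [twist, rotAux_one_zero]

lemma twist_inv' (q : E) (g : ℝ → ℝ) (x : E) :
    twist q e f g (twist q e f (-g) x) = x := by
  rw [twist_twist he hf hef, add_neg_cancel]
  simp [twist, rotAux_one_zero]

lemma twist_isometry_on (q : E) (g : ℝ → ℝ) {x y : E} {α : ℝ}
    (hx : g (‖x - q‖ ^ 2) = α) (hy : g (‖y - q‖ ^ 2) = α) :
    ‖twist q e f g x - twist q e f g y‖ = ‖x - y‖ := by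
  simp only [twist, hx, hy, add_sub_add_left_eq_sub, ← rotAux_sub]
  rw [rotAux_norm he hf hef _ _ (Real.cos_sq_add_sin_sq _), sub_sub_sub_cancel_right]

lemma twist_lipschitz_aux (q : E) (g : ℝ → ℝ) {Lh R₂ : ℝ} (hLh : 0 ≤ Lh) (hR₂ : 0 ≤ R₂)
    (hlip : ∀ s t : ℝ, |g (s ^ 2) - g (t ^ 2)| ≤ Lh * |s - t|)
    (hzero : ∀ t : ℝ, R₂ ≤ t → g (t ^ 2) = 0) {x y : E} (hxy : ‖x - q‖ ≤ ‖y - q‖) :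
    ‖twist q e f g x - twist q e f g y‖ ≤ (1 + 2 * Lh * R₂) * ‖x - y‖ := by
  by_cases hx : ‖x - q‖ ≤ R₂
  · set θx := g (‖x - q‖ ^ 2) with hθx
    set θy := g (‖y - q‖ ^ 2) with hθy
    have key : twist q e f g x - twist q e f g y =
        (rotAux e f (Real.cos θx) (Real.sin θx) (x - q)
          - rotAux e f (Real.cos θy) (Real.sin θy) (x - q))
        + rotAux e f (Real.cos θy) (Real.sin θy) (x - y) := by
      have hs : rotAux e f (Real.cos θy) (Real.sin θy) (x - q)
          - rotAux e f (Real.cos θy) (Real.sin θy) (y - q)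
          = rotAux e f (Real.cos θy) (Real.sin θy) (x - y) := by
        rw [← rotAux_sub, sub_sub_sub_cancel_right]
      simp only [twist, add_sub_add_left_eq_sub, ← hθx, ← hθy]
      rw [← hs]; abel
    have hθ : |θx - θy| ≤ Lh * ‖x - y‖ := by
      calc |θx - θy| ≤ Lh * |‖x - q‖ - ‖y - q‖| := hlip _ _
        _ ≤ Lh * ‖x - y‖ := by
            apply mul_le_mul_of_nonneg_left _ hLh
            calc |‖x - q‖ - ‖y - q‖| ≤ ‖(x - q) - (y - q)‖ := abs_norm_sub_norm_le _ _
              _ = ‖x - y‖ := by rw [sub_sub_sub_cancel_right]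
    have hcos : |Real.cos θx - Real.cos θy| ≤ |θx - θy| := _root_.abs_cos_sub_cos_le θx θy
    have hsin : |Real.sin θx - Real.sin θy| ≤ |θx - θy| := _root_.abs_sin_sub_sin_le θx θy
    have h1 : ‖rotAux e f (Real.cos θx) (Real.sin θx) (x - q)
        - rotAux e f (Real.cos θy) (Real.sin θy) (x - q)‖ ≤ 2 * (Lh * ‖x - y‖) * R₂ := by
      rw [rotAux_sub_rotAux]
      calc ‖_ + _‖ ≤ ‖(Real.cos θx - Real.cos θy) • (⟪x - q, e⟫ • e + ⟪x - q, f⟫ • f)‖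
            + ‖(Real.sin θx - Real.sin θy) • (⟪x - q, e⟫ • f - ⟪x - q, f⟫ • e)‖ :=
          norm_add_le _ _
        _ ≤ |Real.cos θx - Real.cos θy| * ‖x - q‖ + |Real.sin θx - Real.sin θy| * ‖x - q‖ := by
            rw [norm_smul, norm_smul, Real.norm_eq_abs, Real.norm_eq_abs]
            gcongr <;> first
              | exact norm_projP_le he hf hef _
              | exact norm_projQ_le he hf hef _
        _ ≤ 2 * (Lh * ‖x - y‖) * R₂ := by
            have hxq : (0:ℝ) ≤ ‖x - q‖ := norm_nonneg _
            nlinarith [le_trans hcos hθ, le_trans hsin hθ, abs_nonneg (θx - θy)]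
    have h2 : ‖rotAux e f (Real.cos θy) (Real.sin θy) (x - y)‖ = ‖x - y‖ :=
      rotAux_norm he hf hef _ _ (Real.cos_sq_add_sin_sq _) _
    calc ‖twist q e f g x - twist q e f g y‖ ≤ 2 * (Lh * ‖x - y‖) * R₂ + ‖x - y‖ := by
          rw [key]; exact le_trans (norm_add_le _ _) (by rw [h2]; exact add_le_add h1 le_rfl)
      _ ≤ (1 + 2 * Lh * R₂) * ‖x - y‖ := by
          have hR : (0:ℝ) ≤ R₂ := le_trans (norm_nonneg (x - q)) hx
          nlinarith [norm_nonneg (x - y)]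
  · push_neg at hx
    have hx0 : g (‖x - q‖ ^ 2) = 0 := hzero _ hx.le
    have hy0 : g (‖y - q‖ ^ 2) = 0 := hzero _ (le_trans hx.le hxy)
    rw [twist_eq_self hx0, twist_eq_self hy0]
    nlinarith [norm_nonneg (x - y), mul_nonneg (mul_nonneg (by norm_num : (0:ℝ) ≤ 2) hLh) hR₂]

lemma twist_lipschitz (q : E) (g : ℝ → ℝ) {Lh R₂ : ℝ} (hLh : 0 ≤ Lh) (hR₂ : 0 ≤ R₂)
    (hlip : ∀ s t : ℝ, |g (s ^ 2) - g (t ^ 2)| ≤ Lh * |s - t|)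
    (hzero : ∀ t : ℝ, R₂ ≤ t → g (t ^ 2) = 0) (x y : E) :
    ‖twist q e f g x - twist q e f g y‖ ≤ (1 + 2 * Lh * R₂) * ‖x - y‖ := by
  rcases le_total ‖x - q‖ ‖y - q‖ with h | h
  · exact twist_lipschitz_aux he hf hef q g hLh hR₂ hlip hzero h
  · rw [norm_sub_rev, norm_sub_rev x y]
    exact twist_lipschitz_aux he hf hef q g hLh hR₂ hlip hzero h

end ortho

lemma twist_contDiff (q : E) (g : ℝ → ℝ) (hg : ContDiff ℝ 1 g) :
    ContDiff ℝ 1 (twist q e f g) := by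
  have hsub : ContDiff ℝ 1 (fun x : E => x - q) := contDiff_id.sub contDiff_const
  have hnsq : ContDiff ℝ 1 (fun x : E => ‖x - q‖ ^ 2) := (contDiff_norm_sq ℝ).comp hsub
  have hθ : ContDiff ℝ 1 (fun x : E => g (‖x - q‖ ^ 2)) := hg.comp hnsq
  have hcos : ContDiff ℝ 1 (fun x : E => Real.cos (g (‖x - q‖ ^ 2))) :=
    Real.contDiff_cos.comp hθ
  have hsin : ContDiff ℝ 1 (fun x : E => Real.sin (g (‖x - q‖ ^ 2))) :=
    Real.contDiff_sin.comp hθ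
  have hie : ContDiff ℝ 1 (fun x : E => ⟪x - q, e⟫) := hsub.inner ℝ contDiff_const
  have hif : ContDiff ℝ 1 (fun x : E => ⟪x - q, f⟫) := hsub.inner ℝ contDiff_const
  unfold twist rotAux
  exact contDiff_const.add <| (hsub.add <| ((hcos.sub contDiff_const).smul
    ((hie.smul contDiff_const).add (hif.smul contDiff_const)))).add <|
    hsin.smul ((hie.smul contDiff_const).sub (hif.smul contDiff_const))

/-- Model bump profile: `u0 t = smoothTransition ((49 - t²)/40)`; equals 1 for `|t| ≤ 3`,
0 for `|t| ≥ 7`. -/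
def u0 : ℝ → ℝ := fun t => Real.smoothTransition ((49 - t ^ 2) / 40)

lemma u0_contDiff : ContDiff ℝ 2 u0 :=
  Real.smoothTransition.contDiff.comp (((contDiff_const.sub (contDiff_id.pow 2)).div_const 40))

lemma u0_lipschitz : ∃ k₀ : ℝ, 0 ≤ k₀ ∧ ∀ s t : ℝ, |u0 s - u0 t| ≤ k₀ * |s - t| := by
  have hcd := u0_contDiff
  have hdiff : Differentiable ℝ u0 := hcd.differentiable (by norm_num)
  have hdc : Continuous (deriv u0) := (hcd.iterate_deriv' 1 1).continuous
  obtain ⟨C, hC⟩ := (isCompact_Icc (a := (-8:ℝ)) (b := 8)).exists_bound_of_continuousOn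
    hdc.continuousOn
  refine ⟨max C 0, le_max_right _ _, ?_⟩
  have hb : ∀ t : ℝ, ‖deriv u0 t‖ ≤ max C 0 := by
    intro t
    by_cases ht : |t| ≤ 8
    · exact le_trans (hC t (by rw [Set.mem_Icc]; exact abs_le.mp ht)) (le_max_left _ _)
    · push_neg at ht
      have hz : deriv u0 t = 0 := by
        have hopen : IsOpen {s : ℝ | 8 < |s|} := isOpen_lt continuous_const continuous_abs
        have hloc : u0 =ᶠ[nhds t] fun _ => (0:ℝ) := by
          filter_upwards [hopen.mem_nhds ht] with s hs
          refine Real.smoothTransition.zero_of_nonpos ?_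
          have : (64:ℝ) < s ^ 2 := by nlinarith [sq_abs s, hs, abs_nonneg s]
          nlinarith
        rw [hloc.deriv_eq]
        exact deriv_const t 0
      rw [hz, norm_zero]
      exact le_max_right _ _
  have hlip : LipschitzWith (Real.toNNReal (max C 0)) u0 := by
    apply lipschitzWith_of_nnnorm_deriv_le hdiff
    intro x
    rw [← NNReal.coe_le_coe, coe_nnnorm, Real.coe_toNNReal _ (le_max_right C 0)]
    exact hb x
  intro s t
  have := hlip.dist_le_mul s t
  rwa [Real.dist_eq, Real.dist_eq, Real.coe_toNNReal _ (le_max_right C 0)] at this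

lemma u0_eq_one {t : ℝ} (h : t ^ 2 ≤ 9) : u0 t = 1 :=
  Real.smoothTransition.one_of_one_le (by linarith)

lemma u0_eq_zero {t : ℝ} (h : 49 ≤ t ^ 2) : u0 t = 0 :=
  Real.smoothTransition.zero_of_nonpos (by linarith)

section euclid
variable [FiniteDimensional ℝ E]

lemma exists_unit_perp (hd : 2 ≤ Module.finrank ℝ E) (v : E) :
    ∃ w : E, ‖w‖ = 1 ∧ ⟪v, w⟫ = 0 := by
  have hK : (ℝ ∙ v)ᗮ ≠ ⊥ := by
    intro hbot
    have h1 := Submodule.finrank_add_finrank_orthogonal (K := ℝ ∙ v)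
    rw [hbot, finrank_bot] at h1
    have h2 : Module.finrank ℝ ↥(ℝ ∙ v) ≤ 1 := by
      rcases eq_or_ne v 0 with hv | hv
      · subst hv
        rw [Submodule.span_zero_singleton, finrank_bot]
        norm_num
      · rw [finrank_span_singleton hv]
    omega
  obtain ⟨w, hwmem, hw0⟩ := Submodule.exists_mem_ne_zero_of_ne_bot hK
  refine ⟨‖w‖⁻¹ • w, ?_, ?_⟩
  · rw [norm_smul, norm_inv, norm_norm, inv_mul_cancel₀ (norm_ne_zero_iff.mpr hw0)]
  · rw [real_inner_smul_right, hwmem v (Submodule.mem_span_singleton_self v), mul_zero]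

/-- For unit vectors u, u₂ there are an orthonormal pair (e,f) and angle α ∈ [-π,π]
such that the (e,f)-planar rotation by α maps u to u₂. -/
lemma exists_rot_to (hd : 2 ≤ Module.finrank ℝ E) {u u₂ : E} (hu : ‖u‖ = 1)
    (hu₂ : ‖u₂‖ = 1) :
    ∃ (e f : E) (α : ℝ), ‖e‖ = 1 ∧ ‖f‖ = 1 ∧ ⟪e, f⟫ = 0 ∧ |α| ≤ π ∧
      rotAux e f (Real.cos α) (Real.sin α) u = u₂ := by
  have huu : ⟪u, u⟫ = 1 := by rw [real_inner_self_eq_norm_sq, hu]; norm_num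
  set c : ℝ := ⟪u, u₂⟫ with hc
  have hcle : |c| ≤ 1 := by
    have := abs_real_inner_le_norm u u₂
    rwa [hu, hu₂, mul_one] at this
  set w : E := u₂ - c • u with hw
  have huw : ⟪u, w⟫ = 0 := by
    rw [hw, inner_sub_right, real_inner_smul_right, huu, mul_one, hc, sub_self]
  rcases eq_or_ne w 0 with hw0 | hw0
  · -- colinear case : u₂ = c • u with c = ±1
    have hu₂c : u₂ = c • u := by
      have := hw0
      rw [hw, sub_eq_zero] at this
      exact this
    have hc2 : c ^ 2 = 1 := by
      have h : ‖u₂‖ = |c| * ‖u‖ := by rw [hu₂c, norm_smul, Real.norm_eq_abs]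
      rw [hu, hu₂, mul_one] at h
      nlinarith [sq_abs c]
    obtain ⟨f, hf1, hf2⟩ := exists_unit_perp hd u
    have hcc : (c - 1) * (c + 1) = 0 := by ring_nf; linarith [hc2]
    rcases mul_eq_zero.mp hcc with h1 | h1
    · refine ⟨u, f, 0, hu, hf1, hf2, by simp [Real.pi_nonneg], ?_⟩
      rw [Real.cos_zero, Real.sin_zero, rotAux_one_zero, hu₂c]
      have : c = 1 := by linarith
      rw [this, one_smul]
    · refine ⟨u, f, π, hu, hf1, hf2, by rw [abs_of_nonneg Real.pi_nonneg], ?_⟩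
      have hcn : c = -1 := by linarith
      rw [Real.cos_pi, Real.sin_pi, hu₂c, hcn]
      simp only [rotAux, huu, hf2]
      module
  · -- generic case
    have hwn : ‖w‖ ^ 2 = 1 - c ^ 2 := by
      rw [← real_inner_self_eq_norm_sq, hw]
      have hcomm : ⟪u₂, u⟫ = c := by rw [real_inner_comm, ← hc]
      have h22 : ⟪u₂, u₂⟫ = 1 := by rw [real_inner_self_eq_norm_sq, hu₂]; norm_num
      simp only [inner_sub_left, inner_sub_right, real_inner_smul_left, real_inner_smul_right,
        huu, hcomm, ← hc, h22]
      ring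
    set f : E := ‖w‖⁻¹ • w with hfdef
    have hwne : ‖w‖ ≠ 0 := norm_ne_zero_iff.mpr hw0
    have hf1 : ‖f‖ = 1 := by
      rw [hfdef, norm_smul, norm_inv, norm_norm, inv_mul_cancel₀ hwne]
    have huf : ⟪u, f⟫ = 0 := by rw [hfdef, real_inner_smul_right, huw, mul_zero]
    refine ⟨u, f, Real.arccos c, hu, hf1, huf, ?_, ?_⟩
    · rw [abs_of_nonneg (Real.arccos_nonneg c)]
      exact Real.arccos_le_pi c
    · have habs := abs_le.mp hcle
      rw [Real.cos_arccos habs.1 habs.2, Real.sin_arccos]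
      have hsin : Real.sqrt (1 - c ^ 2) = ‖w‖ := by
        rw [← hwn, Real.sqrt_sq (norm_nonneg w)]
      rw [hsin]
      have key : ‖w‖ • f = u₂ - c • u := by
        rw [hfdef, smul_smul, mul_inv_cancel₀ hwne, one_smul, hw]
      simp only [rotAux, huu, huf, one_smul, zero_smul, smul_zero, sub_zero, smul_sub,
        smul_add]
      rw [key]
      module

end euclid

section cyl

variable {d : ℕ}

lemma midpoint_mem_rigidCyl (a b : EuclideanSpace ℝ (Fin d)) {ρ : ℝ} (hρ : 0 < ρ) :
    midpoint ℝ a b ∈ rigidCyl a b ρ := by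
  exact ⟨0, 0, by norm_num, by simp, by simpa using hρ, by simp⟩

lemma rigidCyl_image_subset (R : EuclideanSpace ℝ (Fin d) → EuclideanSpace ℝ (Fin d))
    (hadd : ∀ z w, R (z + w) = R z + R w) (hsmul : ∀ (t : ℝ) z, R (t • z) = t • R z)
    (hinner : ∀ z w, ⟪R z, R w⟫ = ⟪z, w⟫) (t a b : EuclideanSpace ℝ (Fin d)) (ρ : ℝ) :
    (fun x => t + R x) '' rigidCyl a b ρ ⊆ rigidCyl (t + R a) (t + R b) ρ := by
  have hsub : ∀ z w, R (z - w) = R z - R w := by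
    intro z w
    rw [sub_eq_add_neg, hadd, ← neg_one_smul ℝ w, hsmul, neg_one_smul, ← sub_eq_add_neg]
  have hnorm : ∀ z, ‖R z‖ = ‖z‖ := by
    intro z
    have h := hinner z z
    rw [real_inner_self_eq_norm_sq, real_inner_self_eq_norm_sq] at h
    rw [← Real.sqrt_sq (norm_nonneg (R z)), ← Real.sqrt_sq (norm_nonneg z), h]
  rintro - ⟨x, ⟨s, v, hs, hv, hvn, rfl⟩, rfl⟩
  refine ⟨s, R v, hs, ?_, ?_, ?_⟩
  · have h : t + R b - (t + R a) = R (b - a) := by rw [hsub]; abel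
    rw [h, hinner, hv]
  · rw [hnorm]; exact hvn
  · have hmid : midpoint ℝ (t + R a) (t + R b) = t + R (midpoint ℝ a b) := by
      simp only [midpoint_eq_smul_add, invOf_eq_inv, hsmul, hadd]
      module
    have hba : t + R b - (t + R a) = R (b - a) := by rw [hsub]; abel
    rw [hmid, hba, ← hsmul]
    show t + R (midpoint ℝ a b + (s / 2) • (b - a) + v)
      = t + R (midpoint ℝ a b) + R ((s / 2) • (b - a)) + R v
    rw [hadd, hadd]
    abel

lemma rigidCyl_image (R R' : EuclideanSpace ℝ (Fin d) → EuclideanSpace ℝ (Fin d))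
    (hadd : ∀ z w, R (z + w) = R z + R w) (hsmul : ∀ (t : ℝ) z, R (t • z) = t • R z)
    (hinner : ∀ z w, ⟪R z, R w⟫ = ⟪z, w⟫)
    (hadd' : ∀ z w, R' (z + w) = R' z + R' w) (hsmul' : ∀ (t : ℝ) z, R' (t • z) = t • R' z)
    (hinner' : ∀ z w, ⟪R' z, R' w⟫ = ⟪z, w⟫)
    (hRR' : ∀ z, R (R' z) = z) (hR'R : ∀ z, R' (R z) = z)
    (t a b : EuclideanSpace ℝ (Fin d)) (ρ : ℝ) :
    (fun x => t + R x) '' rigidCyl a b ρ = rigidCyl (t + R a) (t + R b) ρ := by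
  apply Set.Subset.antisymm
  · exact rigidCyl_image_subset R hadd hsmul hinner t a b ρ
  · intro y hy
    have h2 := rigidCyl_image_subset R' hadd' hsmul' hinner' (-(R' t)) (t + R a) (t + R b) ρ
    have hmem : -(R' t) + R' y ∈ rigidCyl (-(R' t) + R' (t + R a)) (-(R' t) + R' (t + R b)) ρ :=
      h2 ⟨y, hy, rfl⟩
    have ha' : -(R' t) + R' (t + R a) = a := by rw [hadd', hR'R]; abel
    have hb' : -(R' t) + R' (t + R b) = b := by rw [hadd', hR'R]; abel
    rw [ha', hb'] at hmem
    refine ⟨-(R' t) + R' y, hmem, ?_⟩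
    have hneg : ∀ z, R (-z) = -R z := by
      intro z
      rw [← neg_one_smul ℝ z, hsmul, neg_one_smul]
    show t + R (-(R' t) + R' y) = y
    rw [hadd, hneg, hRR', hRR']
    abel

end cyl


set_option maxHeartbeats 2000000 in
/-- **Rigid motion of cylinders within a ball**: there is `K > 0`, depending only on the
dimension `d ≥ 2`, such that whenever `C`, `C'` are isometric rigid solid cylinders contained
in a ball `B(p,r)`, there is a `C¹` diffeomorphism `φ` of `ℝ^d` supported in `B(p,10r)`
mapping `C` isometrically onto `C'`, with `[φ]_Lip ≤ K`. -/
theorem cylinder_isometry (d : ℕ) (hd : 2 ≤ d) :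
    ∃ K : ℝ, 0 < K ∧
      ∀ (p : EuclideanSpace ℝ (Fin d)) (r : ℝ) (a b a' b' : EuclideanSpace ℝ (Fin d))
        (ρ ρ' : ℝ), a ≠ b → 0 < ρ → a' ≠ b' → 0 < ρ' →
        rigidCyl a b ρ ⊆ Metric.ball p r → rigidCyl a' b' ρ' ⊆ Metric.ball p r →
        (∃ ι : EuclideanSpace ℝ (Fin d) ≃ᵢ EuclideanSpace ℝ (Fin d),
          ι '' rigidCyl a b ρ = rigidCyl a' b' ρ') →
        ∃ φ ψ : EuclideanSpace ℝ (Fin d) → EuclideanSpace ℝ (Fin d),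
          ContDiff ℝ 1 φ ∧ ContDiff ℝ 1 ψ ∧
          Function.LeftInverse ψ φ ∧ Function.RightInverse ψ φ ∧
          closure {x | φ x ≠ x} ⊆ Metric.ball p (10 * r) ∧
          φ '' rigidCyl a b ρ = rigidCyl a' b' ρ' ∧
          (∀ x ∈ rigidCyl a b ρ, ∀ y ∈ rigidCyl a b ρ, dist (φ x) (φ y) = dist x y) ∧
          ∀ x y, dist (φ x) (φ y) ≤ K * dist x y := by
  obtain ⟨k₀, hk₀, hk₀lip⟩ := u0_lipschitz
  have hπ := Real.pi_pos
  have hK₁pos : (0:ℝ) < 1 + 14 * π * k₀ := by nlinarith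
  refine ⟨(1 + 14 * π * k₀) ^ 3, by positivity, ?_⟩
  rintro p r a b a' b' ρ ρ' hab hρ hab' hρ' hCb hC'b ⟨ι, hι⟩
  have hdF : 2 ≤ Module.finrank ℝ (EuclideanSpace ℝ (Fin d)) := by
    rw [finrank_euclideanSpace_fin]; exact hd
  set m₁ := midpoint ℝ a b with hm₁def
  have hm₁C : m₁ ∈ rigidCyl a b ρ := midpoint_mem_rigidCyl a b hρ
  have hm₁ : dist m₁ p < r := Metric.mem_ball.mp (hCb hm₁C)
  have hr : 0 < r := lt_of_le_of_lt dist_nonneg hm₁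
  -- Mazur–Ulam: ι is affine
  set L := ι.toRealLinearIsometryEquiv with hLdef
  have hιx : ∀ x, ι x = ι 0 + L x := by
    intro x
    rw [hLdef, ι.toRealLinearIsometryEquiv_apply]
    abel
  set a₂ := ι a with ha₂def
  set b₂ := ι b with hb₂def
  have hC'eq : rigidCyl a' b' ρ' = rigidCyl a₂ b₂ ρ := by
    rw [← hι]
    have h1 : ι '' rigidCyl a b ρ = (fun x => ι 0 + L x) '' rigidCyl a b ρ :=
      Set.image_congr fun x _ => hιx x
    rw [h1, rigidCyl_image (fun z => L z) (fun z => L.symm z)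
      (fun z w => L.map_add z w) (fun t z => L.map_smul t z)
      (fun z w => L.inner_map_map z w)
      (fun z w => L.symm.map_add z w) (fun t z => L.symm.map_smul t z)
      (fun z w => L.symm.inner_map_map z w)
      (fun z => L.apply_symm_apply z) (fun z => L.symm_apply_apply z)]
    rw [← hιx a, ← hιx b, ← ha₂def, ← hb₂def]
  set m₂ := midpoint ℝ a₂ b₂ with hm₂def
  have hm₂C : m₂ ∈ rigidCyl a' b' ρ' := by
    rw [hC'eq]; exact midpoint_mem_rigidCyl a₂ b₂ hρ
  have hm₂ : dist m₂ p < r := Metric.mem_ball.mp (hC'b hm₂C)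
  set c := m₂ - m₁ with hcdef
  have hc2r : ‖c‖ < 2 * r := by
    have h1 : ‖c‖ = dist m₂ m₁ := by rw [dist_eq_norm]
    have h2 := dist_triangle m₂ p m₁
    rw [dist_comm p m₁] at h2
    linarith [h1 ▸ h2]
  set ℓ := ‖b - a‖ with hℓdef
  have hba0 : b - a ≠ 0 := sub_ne_zero.mpr (Ne.symm hab)
  have hℓ : 0 < ℓ := norm_pos_iff.mpr hba0
  set u := ℓ⁻¹ • (b - a) with hudef
  have hu : ‖u‖ = 1 := by
    rw [hudef, norm_smul, Real.norm_eq_abs, abs_of_pos (inv_pos.mpr hℓ), ← hℓdef,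
      inv_mul_cancel₀ hℓ.ne']
  have hba₂ : b₂ - a₂ = L (b - a) := by
    rw [ha₂def, hb₂def, hιx a, hιx b, map_sub]
    abel
  have hba₂n : ‖b₂ - a₂‖ = ℓ := by rw [hba₂, L.norm_map]
  set u₂ := ℓ⁻¹ • (b₂ - a₂) with hu₂def
  have hu₂ : ‖u₂‖ = 1 := by
    rw [hu₂def, norm_smul, Real.norm_eq_abs, abs_of_pos (inv_pos.mpr hℓ), hba₂n,
      inv_mul_cancel₀ hℓ.ne']
  obtain ⟨e₁, f₁, α₁, he₁, hf₁, hef₁, hα₁, hrot⟩ := exists_rot_to hdF hu hu₂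
  have hRba : rotAux e₁ f₁ (Real.cos α₁) (Real.sin α₁) (b - a) = b₂ - a₂ := by
    have h1 : b - a = ℓ • u := by
      rw [hudef, smul_smul, mul_inv_cancel₀ hℓ.ne', one_smul]
    have h2 : b₂ - a₂ = ℓ • u₂ := by
      rw [hu₂def, smul_smul, mul_inv_cancel₀ hℓ.ne', one_smul]
    rw [h1, rotAux_smul, hrot, h2]
  -- plane for the translation
  obtain ⟨e₂, f₂, he₂, hf₂, hef₂, hSc⟩ :
      ∃ e f : EuclideanSpace ℝ (Fin d), ‖e‖ = 1 ∧ ‖f‖ = 1 ∧ ⟪e, f⟫ = 0 ∧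
        rotAux e f (-1) 0 c = -c := by
    rcases eq_or_ne c 0 with hc0 | hc0
    · obtain ⟨f, hf, hufp⟩ := exists_unit_perp hdF u
      exact ⟨u, f, hu, hf, hufp, by rw [hc0, rotAux_zero, neg_zero]⟩
    · obtain ⟨f, hf, hcfp⟩ := exists_unit_perp hdF c
      have hcn : ‖c‖ ≠ 0 := norm_ne_zero_iff.mpr hc0
      refine ⟨‖c‖⁻¹ • c, f, ?_, hf, ?_, ?_⟩
      · rw [norm_smul, norm_inv, norm_norm, inv_mul_cancel₀ hcn]
      · rw [real_inner_smul_left, hcfp, mul_zero]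
      · have hkey : ⟪c, ‖c‖⁻¹ • c⟫ = ‖c‖ := by
          rw [real_inner_smul_right, real_inner_self_eq_norm_sq, sq]
          field_simp
        simp only [rotAux, hkey, hcfp, mul_zero, zero_smul, add_zero, sub_zero,
          zero_sub, smul_neg, smul_smul, mul_inv_cancel₀ hcn]
        match_scalars
        · field_simp; norm_num
        · ring
  set q₂ := m₁ + (2⁻¹ : ℝ) • c with hq₂def
  have hq₂m₁ : ‖q₂ - m₁‖ < r := by
    rw [hq₂def, add_sub_cancel_left, norm_smul]
    rw [Real.norm_eq_abs]
    rw [abs_of_pos (by norm_num : (0:ℝ) < (2⁻¹:ℝ))]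
    linarith
  -- bump functions
  have hr2 : (0:ℝ) < r ^ 2 := by positivity
  set gg : ℝ → ℝ → ℝ := fun α s => α * Real.smoothTransition ((49 - s / r ^ 2) / 40)
    with hggdef
  have hgg_hi : ∀ α s, s ≤ 9 * r ^ 2 → gg α s = α := by
    intro α s hs
    have h1 : s / r ^ 2 ≤ 9 := (div_le_iff₀ hr2).mpr (by linarith)
    rw [hggdef]
    simp only
    rw [Real.smoothTransition.one_of_one_le (by linarith), mul_one]
  have hgg_lo : ∀ α s, 49 * r ^ 2 ≤ s → gg α s = 0 := by
    intro α s hs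
    have h1 : (49:ℝ) ≤ s / r ^ 2 := (le_div_iff₀ hr2).mpr (by linarith)
    rw [hggdef]
    simp only
    rw [Real.smoothTransition.zero_of_nonpos (by linarith), mul_zero]
  have hgg_cd : ∀ α, ContDiff ℝ 1 (gg α) := by
    intro α
    exact contDiff_const.mul (Real.smoothTransition.contDiff.comp
      ((contDiff_const.sub (contDiff_id.div_const (r ^ 2))).div_const 40))
  have hgg_sq : ∀ α t, gg α (t ^ 2) = α * u0 (t / r) := by
    intro α t
    rw [hggdef]
    simp only [u0]
    rw [div_pow]
  have hgg_zero : ∀ α t, 7 * r ≤ t → gg α (t ^ 2) = 0 := by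
    intro α t ht
    exact hgg_lo α _ (by nlinarith)
  set Lh := π * k₀ / r with hLhdef
  have hLh : 0 ≤ Lh := by positivity
  have hgg_lip : ∀ α, |α| ≤ π → ∀ s t : ℝ, |gg α (s ^ 2) - gg α (t ^ 2)| ≤ Lh * |s - t| := by
    intro α hα s t
    rw [hgg_sq, hgg_sq, ← mul_sub, abs_mul]
    have h1 : |u0 (s / r) - u0 (t / r)| ≤ k₀ * |s / r - t / r| := hk₀lip _ _
    have h2 : |s / r - t / r| = |s - t| / r := by
      rw [div_sub_div_same, abs_div, abs_of_pos hr]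
    rw [h2] at h1
    calc |α| * |u0 (s / r) - u0 (t / r)| ≤ π * (k₀ * (|s - t| / r)) :=
          mul_le_mul hα h1 (abs_nonneg _) Real.pi_pos.le
      _ = Lh * |s - t| := by rw [hLhdef]; field_simp
  set K₁ := 1 + 2 * Lh * (7 * r) with hK₁def
  have hK₁eq : K₁ = 1 + 14 * π * k₀ := by
    rw [hK₁def, hLhdef]
    field_simp
    ring
  have hK₁pos' : 0 < K₁ := by rw [hK₁eq]; exact hK₁pos
  have hR₂ : (0:ℝ) ≤ 7 * r := by linarith
  -- the three twists
  set R₁ : EuclideanSpace ℝ (Fin d) → EuclideanSpace ℝ (Fin d) :=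
    rotAux e₁ f₁ (Real.cos α₁) (Real.sin α₁) with hR₁def
  set S : EuclideanSpace ℝ (Fin d) → EuclideanSpace ℝ (Fin d) := rotAux e₂ f₂ (-1) 0
    with hSdef
  set tw1 := twist m₁ e₁ f₁ (gg α₁) with htw1def
  set tw2 := twist m₁ e₂ f₂ (gg π) with htw2def
  set tw3 := twist q₂ e₂ f₂ (gg (-π)) with htw3def
  set φ : EuclideanSpace ℝ (Fin d) → EuclideanSpace ℝ (Fin d) :=
    fun x => tw3 (tw2 (tw1 x)) with hφdef
  set ψ : EuclideanSpace ℝ (Fin d) → EuclideanSpace ℝ (Fin d) :=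
    fun x => twist m₁ e₁ f₁ (gg (-α₁)) (twist m₁ e₂ f₂ (gg (-π))
      (twist q₂ e₂ f₂ (gg π) x)) with hψdef
  have hggneg : ∀ α : ℝ, gg (-α) = -(gg α) := by
    intro α
    funext s
    rw [hggdef]
    simp only [Pi.neg_apply]
    ring
  have hφcd : ContDiff ℝ 1 φ := by
    rw [hφdef]
    exact (twist_contDiff _ _ (hgg_cd (-π))).comp
      ((twist_contDiff _ _ (hgg_cd π)).comp (twist_contDiff _ _ (hgg_cd α₁)))
  have hψcd : ContDiff ℝ 1 ψ := by
    rw [hψdef]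
    exact (twist_contDiff _ _ (hgg_cd (-α₁))).comp
      ((twist_contDiff _ _ (hgg_cd (-π))).comp (twist_contDiff _ _ (hgg_cd π)))
  have hleft : Function.LeftInverse ψ φ := by
    intro x
    rw [hφdef, hψdef]
    simp only
    rw [htw1def, htw2def, htw3def]
    rw [show gg (-π) = -(gg π) from hggneg π]
    rw [twist_inv' he₂ hf₂ hef₂]
    rw [twist_inv he₂ hf₂ hef₂]
    rw [show gg (-α₁) = -(gg α₁) from hggneg α₁]
    rw [twist_inv he₁ hf₁ hef₁]
  have hright : Function.RightInverse ψ φ := by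
    intro x
    rw [hφdef, hψdef]
    simp only
    rw [htw1def, htw2def, htw3def]
    rw [show gg (-α₁) = -(gg α₁) from hggneg α₁]
    rw [twist_inv' he₁ hf₁ hef₁]
    rw [show gg (-π) = -(gg π) from hggneg π]
    rw [twist_inv' he₂ hf₂ hef₂]
    rw [twist_inv he₂ hf₂ hef₂]
  -- support
  have hsupp : ∀ x, 9 * r ≤ dist x p → φ x = x := by
    intro x hx
    have hq₂p : dist q₂ p < 2 * r := by
      calc dist q₂ p ≤ dist q₂ m₁ + dist m₁ p := dist_triangle _ _ _
        _ < 2 * r := by rw [dist_eq_norm]; linarith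
    have hxm : 7 * r ≤ ‖x - m₁‖ := by
      have h1 := dist_triangle x m₁ p
      have h2 : dist x m₁ = ‖x - m₁‖ := dist_eq_norm _ _
      linarith
    have hxq : 7 * r ≤ ‖x - q₂‖ := by
      have h1 := dist_triangle x q₂ p
      have h2 : dist x q₂ = ‖x - q₂‖ := dist_eq_norm _ _
      linarith
    rw [hφdef]
    simp only
    rw [htw1def, twist_eq_self (hgg_zero α₁ _ hxm), htw2def,
      twist_eq_self (hgg_zero π _ hxm), htw3def, twist_eq_self (hgg_zero (-π) _ hxq)]
  have hclos : closure {x | φ x ≠ x} ⊆ Metric.ball p (10 * r) := by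
    have h1 : {x | φ x ≠ x} ⊆ Metric.closedBall p (9 * r) := by
      intro x hx
      rw [Metric.mem_closedBall]
      by_contra h
      push_neg at h
      exact hx (hsupp x h.le)
    calc closure {x | φ x ≠ x} ⊆ Metric.closedBall p (9 * r) :=
          closure_minimal h1 Metric.isClosed_closedBall
      _ ⊆ Metric.ball p (10 * r) := Metric.closedBall_subset_ball (by linarith)
  -- rigid region computations
  have hSS : ∀ z, S (S z) = z := by
    intro z
    rw [hSdef, rotAux_comp he₂ hf₂ hef₂]
    norm_num
    exact rotAux_one_zero z
  have hrigid1 : ∀ x, ‖x - m₁‖ ≤ 3 * r → tw1 x = m₁ + R₁ (x - m₁) := by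
    intro x hx
    rw [htw1def, twist_apply_of_angle (hgg_hi α₁ _ (by nlinarith [norm_nonneg (x - m₁)])),
      hR₁def]
  have hrigid2 : ∀ x, ‖x - m₁‖ ≤ 3 * r → tw2 x = m₁ + S (x - m₁) := by
    intro x hx
    rw [htw2def, twist_apply_of_angle (hgg_hi π _ (by nlinarith [norm_nonneg (x - m₁)])),
      hSdef, Real.cos_pi, Real.sin_pi]
  have hrigid3 : ∀ x, ‖x - q₂‖ ≤ 3 * r → tw3 x = q₂ + S (x - q₂) := by
    intro x hx
    rw [htw3def, twist_apply_of_angle (hgg_hi (-π) _ (by nlinarith [norm_nonneg (x - q₂)])),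
      hSdef, Real.cos_neg, Real.sin_neg, Real.cos_pi, Real.sin_pi, neg_zero]
  have hcs₁ : Real.cos α₁ ^ 2 + Real.sin α₁ ^ 2 = 1 := Real.cos_sq_add_sin_sq α₁
  have hcsS : (-1:ℝ) ^ 2 + (0:ℝ) ^ 2 = 1 := by norm_num
  -- pointwise formula on the cylinder
  have hφC : ∀ x ∈ rigidCyl a b ρ, φ x = m₂ + R₁ (x - m₁) := by
    intro x hx
    have hxp : dist x p < r := Metric.mem_ball.mp (hCb hx)
    have hxm : ‖x - m₁‖ < 2 * r := by
      have h1 := dist_triangle x p m₁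
      have h2 : dist x m₁ = ‖x - m₁‖ := dist_eq_norm _ _
      rw [dist_comm p m₁] at h1
      linarith
    have e1 : tw1 x = m₁ + R₁ (x - m₁) := hrigid1 x (by linarith)
    have hn1 : ‖tw1 x - m₁‖ = ‖x - m₁‖ := by
      rw [e1, add_sub_cancel_left, hR₁def, rotAux_norm he₁ hf₁ hef₁ _ _ hcs₁]
    have e2 : tw2 (tw1 x) = m₁ + S (tw1 x - m₁) := hrigid2 _ (by rw [hn1]; linarith)
    have hn2 : ‖tw2 (tw1 x) - m₁‖ = ‖x - m₁‖ := by
      rw [e2, add_sub_cancel_left, hSdef, rotAux_norm he₂ hf₂ hef₂ _ _ hcsS, hn1]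
    have e3 : tw3 (tw2 (tw1 x)) = q₂ + S (tw2 (tw1 x) - q₂) := by
      apply hrigid3
      have h1 : tw2 (tw1 x) - q₂ = (tw2 (tw1 x) - m₁) - (q₂ - m₁) := by abel
      rw [h1]
      calc ‖(tw2 (tw1 x) - m₁) - (q₂ - m₁)‖ ≤ ‖tw2 (tw1 x) - m₁‖ + ‖q₂ - m₁‖ :=
            norm_sub_le _ _
        _ ≤ 3 * r := by rw [hn2]; linarith
    have key : tw2 (tw1 x) - q₂ = S (R₁ (x - m₁)) - (2⁻¹ : ℝ) • c := by
      rw [e2, e1, hq₂def, add_sub_cancel_left]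
      abel
    have hSsub : ∀ z w, S (z - w) = S z - S w := by
      intro z w
      rw [hSdef]
      exact rotAux_sub _ _ _ _
    have hS2 : S ((2⁻¹ : ℝ) • c) = (2⁻¹ : ℝ) • (-c) := by
      rw [hSdef, rotAux_smul, ← hSdef, hSc]
    rw [hφdef]
    simp only
    rw [e3, key, hSsub, hSS, hS2, hq₂def, hcdef]
    module
  -- image of the cylinder
  have hima : φ '' rigidCyl a b ρ = rigidCyl a' b' ρ' := by
    rw [Set.image_congr hφC]
    have hfun : (fun x => m₂ + R₁ (x - m₁)) = fun x => (m₂ - R₁ m₁) + R₁ x := by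
      funext x
      rw [hR₁def, rotAux_sub]
      abel
    set R₁' : EuclideanSpace ℝ (Fin d) → EuclideanSpace ℝ (Fin d) :=
      rotAux e₁ f₁ (Real.cos α₁) (-Real.sin α₁) with hR₁'def
    have hcs₁' : Real.cos α₁ ^ 2 + (-Real.sin α₁) ^ 2 = 1 := by
      rw [neg_pow]; simpa using hcs₁
    have hinv1 : ∀ z, R₁ (R₁' z) = z := by
      intro z
      rw [hR₁def, hR₁'def, rotAux_comp he₁ hf₁ hef₁,
        show Real.cos α₁ * Real.cos α₁ - Real.sin α₁ * -Real.sin α₁ = 1 by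
          linear_combination hcs₁,
        show Real.sin α₁ * Real.cos α₁ + Real.cos α₁ * -Real.sin α₁ = 0 by ring,
        rotAux_one_zero]
    have hinv2 : ∀ z, R₁' (R₁ z) = z := by
      intro z
      rw [hR₁def, hR₁'def, rotAux_comp he₁ hf₁ hef₁,
        show Real.cos α₁ * Real.cos α₁ - -Real.sin α₁ * Real.sin α₁ = 1 by
          linear_combination hcs₁,
        show -Real.sin α₁ * Real.cos α₁ + Real.cos α₁ * Real.sin α₁ = 0 by ring,
        rotAux_one_zero]
    rw [hfun, rigidCyl_image R₁ R₁'
      (fun z w => by rw [hR₁def]; exact rotAux_add _ _ z w)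
      (fun t z => by rw [hR₁def]; exact rotAux_smul _ _ t z)
      (fun z w => by rw [hR₁def]; exact rotAux_inner he₁ hf₁ hef₁ _ _ hcs₁ z w)
      (fun z w => by rw [hR₁'def]; exact rotAux_add _ _ z w)
      (fun t z => by rw [hR₁'def]; exact rotAux_smul _ _ t z)
      (fun z w => by rw [hR₁'def]; exact rotAux_inner he₁ hf₁ hef₁ _ _ hcs₁' z w)
      hinv1 hinv2]
    have hta : m₂ - R₁ m₁ + R₁ a = a₂ := by
      have h1 : R₁ a - R₁ m₁ = R₁ (a - m₁) := by rw [hR₁def, rotAux_sub]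
      have h2 : a - m₁ = (-(2⁻¹) : ℝ) • (b - a) := by
        rw [hm₁def, midpoint_eq_smul_add, invOf_eq_inv]
        module
      have h3 : R₁ (a - m₁) = (-(2⁻¹) : ℝ) • (b₂ - a₂) := by
        rw [h2, hR₁def, rotAux_smul, ← hR₁def, hRba]
      have h4 : m₂ + (-(2⁻¹) : ℝ) • (b₂ - a₂) = a₂ := by
        rw [hm₂def, midpoint_eq_smul_add, invOf_eq_inv]
        module
      calc m₂ - R₁ m₁ + R₁ a = m₂ + (R₁ a - R₁ m₁) := by abel
        _ = a₂ := by rw [h1, h3, h4]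
    have htb : m₂ - R₁ m₁ + R₁ b = b₂ := by
      have h1 : R₁ b - R₁ m₁ = R₁ (b - m₁) := by rw [hR₁def, rotAux_sub]
      have h2 : b - m₁ = ((2⁻¹) : ℝ) • (b - a) := by
        rw [hm₁def, midpoint_eq_smul_add, invOf_eq_inv]
        module
      have h3 : R₁ (b - m₁) = ((2⁻¹) : ℝ) • (b₂ - a₂) := by
        rw [h2, hR₁def, rotAux_smul, ← hR₁def, hRba]
      have h4 : m₂ + ((2⁻¹) : ℝ) • (b₂ - a₂) = b₂ := by
        rw [hm₂def, midpoint_eq_smul_add, invOf_eq_inv]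
        module
      calc m₂ - R₁ m₁ + R₁ b = m₂ + (R₁ b - R₁ m₁) := by abel
        _ = b₂ := by rw [h1, h3, h4]
    rw [hta, htb, ← hC'eq]
  -- isometry on the cylinder
  have hiso : ∀ x ∈ rigidCyl a b ρ, ∀ y ∈ rigidCyl a b ρ,
      dist (φ x) (φ y) = dist x y := by
    intro x hx y hy
    rw [hφC x hx, hφC y hy, dist_eq_norm, dist_eq_norm, add_sub_add_left_eq_sub,
      hR₁def, ← rotAux_sub, sub_sub_sub_cancel_right,
      rotAux_norm he₁ hf₁ hef₁ _ _ hcs₁]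
  -- global Lipschitz bound
  have hαπ : |π| ≤ π := by rw [abs_of_pos hπ]
  have hαπ' : |(-π : ℝ)| ≤ π := by rw [abs_neg, abs_of_pos hπ]
  have hlip1 : ∀ x y, ‖tw1 x - tw1 y‖ ≤ K₁ * ‖x - y‖ := by
    intro x y
    rw [htw1def, hK₁def]
    exact twist_lipschitz he₁ hf₁ hef₁ m₁ (gg α₁) hLh hR₂ (hgg_lip α₁ hα₁)
      (hgg_zero α₁) x y
  have hlip2 : ∀ x y, ‖tw2 x - tw2 y‖ ≤ K₁ * ‖x - y‖ := by
    intro x y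
    rw [htw2def, hK₁def]
    exact twist_lipschitz he₂ hf₂ hef₂ m₁ (gg π) hLh hR₂ (hgg_lip π hαπ)
      (hgg_zero π) x y
  have hlip3 : ∀ x y, ‖tw3 x - tw3 y‖ ≤ K₁ * ‖x - y‖ := by
    intro x y
    rw [htw3def, hK₁def]
    exact twist_lipschitz he₂ hf₂ hef₂ q₂ (gg (-π)) hLh hR₂ (hgg_lip (-π) hαπ')
      (hgg_zero (-π)) x y
  have hlip : ∀ x y, dist (φ x) (φ y) ≤ (1 + 14 * π * k₀) ^ 3 * dist x y := by
    intro x y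
    rw [dist_eq_norm, dist_eq_norm, hφdef]
    simp only
    calc ‖tw3 (tw2 (tw1 x)) - tw3 (tw2 (tw1 y))‖ ≤ K₁ * ‖tw2 (tw1 x) - tw2 (tw1 y)‖ :=
          hlip3 _ _
      _ ≤ K₁ * (K₁ * ‖tw1 x - tw1 y‖) := by
          have := hlip2 (tw1 x) (tw1 y)
          exact mul_le_mul_of_nonneg_left this hK₁pos'.le
      _ ≤ K₁ * (K₁ * (K₁ * ‖x - y‖)) := by
          have := hlip1 x y
          have h2 : K₁ * ‖tw1 x - tw1 y‖ ≤ K₁ * (K₁ * ‖x - y‖) :=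
            mul_le_mul_of_nonneg_left this hK₁pos'.le
          exact mul_le_mul_of_nonneg_left h2 hK₁pos'.le
      _ = (1 + 14 * π * k₀) ^ 3 * ‖x - y‖ := by rw [hK₁eq]; ring
  exact ⟨φ, ψ, hφcd, hψcd, hleft, hright, hclos, hima, hiso, hlip⟩
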